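/- Let f : I → ℝ be continuous and y ∈ I. If y is not an M-point of f, then either (the upper right Dini derivative of f at y is +∞ and the lower left Dini derivative is −∞), or (the upper left Dini derivative is +∞ and the lower right Dini derivative is −∞). -/
import Mathlib


open Filter

/-- Upper right Dini derivative of `f` at `y`, relative to `I`, with values in `EReal`. -/
noncomputable def diniSupR (f : ℝ → ℝ) (I : Set ℝ) (y : ℝ) : EReal :=
  limsup (fun t => (((f t - f y) / (t - y) : ℝ) : EReal)) (nhdsWithin y (Set.Ioi y ∩ I))

/-- Lower right Dini derivative. -/
noncomputable def diniInfR (f : ℝ → ℝ) (I : Set ℝ) (y : ℝ) : EReal :=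
  liminf (fun t => (((f t - f y) / (t - y) : ℝ) : EReal)) (nhdsWithin y (Set.Ioi y ∩ I))

/-- Upper left Dini derivative. -/
noncomputable def diniSupL (f : ℝ → ℝ) (I : Set ℝ) (y : ℝ) : EReal :=
  limsup (fun t => (((f t - f y) / (t - y) : ℝ) : EReal)) (nhdsWithin y (Set.Iio y ∩ I))

/-- Lower left Dini derivative. -/
noncomputable def diniInfL (f : ℝ → ℝ) (I : Set ℝ) (y : ℝ) : EReal :=
  liminf (fun t => (((f t - f y) / (t - y) : ℝ) : EReal)) (nhdsWithin y (Set.Iio y ∩ I))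

/-- `y` is an `M`-point of `f` (relative to `I`), in the equivalent analytic form. -/
def IsMPoint (f : ℝ → ℝ) (I : Set ℝ) (y : ℝ) : Prop :=
  ∃ c : ℝ, 1 ≤ c ∧ ∃ ε > 0, ∀ x ∈ Set.Ioo (y - ε) y ∩ I, ∀ z ∈ Set.Ioo y (y + ε) ∩ I,
    |f x - f y| ≤ c * (|f x - f z| + |z - x|)

lemma aux_limsup_top (g : ℝ → ℝ) (y : ℝ) (S : Set ℝ)
    (h : ∀ M : ℝ, ∀ δ : ℝ, 0 < δ → ∃ t ∈ S, |t - y| < δ ∧ M < g t) :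
    limsup (fun t => ((g t : ℝ) : EReal)) (nhdsWithin y S) = ⊤ := by
  apply top_unique
  rw [le_limsup_iff]
  intro b hb
  obtain ⟨M, hbM, -⟩ := EReal.exists_between_coe_real hb
  rw [frequently_iff]
  intro U hU
  obtain ⟨δ, hδ, hsub⟩ := Metric.mem_nhdsWithin_iff.1 hU
  obtain ⟨t, htS, htδ, htM⟩ := h M δ hδ
  exact ⟨t, hsub ⟨Metric.mem_ball.2 (by simpa [Real.dist_eq] using htδ), htS⟩,
    lt_trans hbM (by exact_mod_cast htM)⟩

lemma aux_liminf_bot (g : ℝ → ℝ) (y : ℝ) (S : Set ℝ)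
    (h : ∀ M : ℝ, ∀ δ : ℝ, 0 < δ → ∃ t ∈ S, |t - y| < δ ∧ g t < M) :
    liminf (fun t => ((g t : ℝ) : EReal)) (nhdsWithin y S) = ⊥ := by
  apply bot_unique
  rw [liminf_le_iff]
  intro b hb
  obtain ⟨M, -, hMb⟩ := EReal.exists_between_coe_real hb
  rw [frequently_iff]
  intro U hU
  obtain ⟨δ, hδ, hsub⟩ := Metric.mem_nhdsWithin_iff.1 hU
  obtain ⟨t, htS, htδ, htM⟩ := h M δ hδ
  exact ⟨t, hsub ⟨Metric.mem_ball.2 (by simpa [Real.dist_eq] using htδ), htS⟩,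
    lt_trans (by exact_mod_cast htM) hMb⟩

/-- For given `M`, `δ` we can find a threshold index. -/
lemma aux_index (M δ : ℝ) (hδ : 0 < δ) :
    ∃ N : ℕ, ∀ n : ℕ, N ≤ n → (M < (n:ℝ) + 1 ∧ -((n:ℝ)+1) < M ∧ 1/((n:ℝ)+2) < δ) := by
  obtain ⟨N, hN⟩ := exists_nat_ge (|M| + 1/δ)
  refine ⟨N, fun n hn => ?_⟩
  have hδ' : 1/δ ≤ (n:ℝ) := le_trans (le_trans (le_add_of_nonneg_left (abs_nonneg M)) hN)
    (by exact_mod_cast hn)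
  have hM : |M| ≤ (n:ℝ) := le_trans (le_trans (le_add_of_nonneg_right (by positivity)) hN)
    (by exact_mod_cast hn)
  have h1 : M ≤ |M| := le_abs_self M
  have h2 : -|M| ≤ M := neg_abs_le M
  refine ⟨by linarith, by linarith, ?_⟩
  rw [div_lt_iff₀ (by positivity)]
  have : 1 ≤ δ * (1/δ) := by rw [mul_one_div, div_self hδ.ne']
  nlinarith

/-- If `f : I → ℝ` is continuous and `y ∈ I` is not an `M`-point of `f`, then either
`D⁺f(y) = +∞` and `D₋f(y) = −∞`, or `D⁻f(y) = +∞` and `D₊f(y) = −∞`. -/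
theorem stmt_5 (I : Set ℝ) (hI : I.OrdConnected) (f : ℝ → ℝ) (hf : ContinuousOn f I)
    (y : ℝ) (hy : y ∈ I) (hnm : ¬ IsMPoint f I y) :
    (diniSupR f I y = ⊤ ∧ diniInfL f I y = ⊥) ∨
    (diniSupL f I y = ⊤ ∧ diniInfR f I y = ⊥) := by
  rw [IsMPoint] at hnm
  push_neg at hnm
  have key : ∀ n : ℕ, ∃ x ∈ Set.Ioo (y - 1/((n:ℝ)+2)) y ∩ I,
      ∃ z ∈ Set.Ioo y (y + 1/((n:ℝ)+2)) ∩ I,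
      ((n:ℝ)+2) * (|f x - f z| + |z - x|) < |f x - f y| := by
    intro n
    exact hnm ((n:ℝ)+2) (by have := Nat.cast_nonneg (α:=ℝ) n; linarith) (1/((n:ℝ)+2))
      (by positivity)
  choose x hx z hz hlt using key
  -- per-index quotient facts
  have quot : ∀ n : ℕ,
      ((f y < f (x n)) → ((n:ℝ)+1 < (f (z n) - f y)/(z n - y) ∧
        (f (x n) - f y)/(x n - y) < -((n:ℝ)+1)))
      ∧ ((¬ f y < f (x n)) → ((n:ℝ)+1 < (f (x n) - f y)/(x n - y) ∧
        (f (z n) - f y)/(z n - y) < -((n:ℝ)+1))) := by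
    intro n
    obtain ⟨⟨h1, h2⟩, -⟩ := hx n
    obtain ⟨⟨h3, h4⟩, -⟩ := hz n
    have h5 := hlt n
    have hba : x n < z n := lt_trans h2 h3
    rw [abs_of_pos (by linarith : (0:ℝ) < z n - x n)] at h5
    have hB : (0:ℝ) ≤ |f (x n) - f (z n)| := abs_nonneg _
    have hB1 : f (x n) - f (z n) ≤ |f (x n) - f (z n)| := le_abs_self _
    have hB2 : -(f (x n) - f (z n)) ≤ |f (x n) - f (z n)| := neg_le_of_neg_le (neg_abs_le _)
    have hn1 : (0:ℝ) ≤ (n:ℝ) + 1 := by positivity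
    constructor
    · intro hc
      rw [abs_of_pos (by linarith : (0:ℝ) < f (x n) - f y)] at h5
      constructor
      · rw [lt_div_iff₀ (by linarith : (0:ℝ) < z n - y)]
        nlinarith [mul_le_mul_of_nonneg_left (show z n - y ≤ z n - x n by linarith) hn1,
          mul_nonneg hn1 hB]
      · rw [div_lt_iff_of_neg (by linarith : x n - y < 0)]
        nlinarith [mul_le_mul_of_nonneg_left (show y - x n ≤ z n - x n by linarith) hn1,
          mul_nonneg hn1 hB]
    · intro hc
      push_neg at hc
      rw [abs_of_nonpos (by linarith : f (x n) - f y ≤ 0)] at h5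
      constructor
      · rw [lt_div_iff_of_neg (by linarith : x n - y < 0)]
        nlinarith [mul_le_mul_of_nonneg_left (show y - x n ≤ z n - x n by linarith) hn1,
          mul_nonneg hn1 hB]
      · rw [div_lt_iff₀ (by linarith : (0:ℝ) < z n - y)]
        nlinarith [mul_le_mul_of_nonneg_left (show z n - y ≤ z n - x n by linarith) hn1,
          mul_nonneg hn1 hB]
  rcases em (∃ᶠ n in atTop, f y < f (x n)) with hfr | hnf
  · left
    constructor
    · rw [diniSupR]
      apply aux_limsup_top
      intro M δ hδ
      obtain ⟨N, hN⟩ := aux_index M δ hδ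
      obtain ⟨n, hnN, hA⟩ := frequently_atTop.1 hfr N
      obtain ⟨hM1, -, hδ'⟩ := hN n hnN
      obtain ⟨⟨h3, h4⟩, hzI⟩ := hz n
      refine ⟨z n, ⟨h3, hzI⟩, ?_, ?_⟩
      · rw [abs_of_pos (by linarith : (0:ℝ) < z n - y)]; linarith
      · exact lt_trans hM1 ((quot n).1 hA).1
    · rw [diniInfL]
      apply aux_liminf_bot
      intro M δ hδ
      obtain ⟨N, hN⟩ := aux_index M δ hδ
      obtain ⟨n, hnN, hA⟩ := frequently_atTop.1 hfr N
      obtain ⟨-, hM2, hδ'⟩ := hN n hnN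
      obtain ⟨⟨h1, h2⟩, hxI⟩ := hx n
      refine ⟨x n, ⟨h2, hxI⟩, ?_, ?_⟩
      · rw [abs_of_neg (by linarith : x n - y < 0)]; linarith
      · exact lt_trans ((quot n).1 hA).2 hM2
  · right
    have hfr' : ∃ᶠ n in atTop, ¬ f y < f (x n) := (not_frequently.1 hnf).frequently
    constructor
    · rw [diniSupL]
      apply aux_limsup_top
      intro M δ hδ
      obtain ⟨N, hN⟩ := aux_index M δ hδ
      obtain ⟨n, hnN, hA⟩ := frequently_atTop.1 hfr' N
      obtain ⟨hM1, -, hδ'⟩ := hN n hnN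
      obtain ⟨⟨h1, h2⟩, hxI⟩ := hx n
      refine ⟨x n, ⟨h2, hxI⟩, ?_, ?_⟩
      · rw [abs_of_neg (by linarith : x n - y < 0)]; linarith
      · exact lt_trans hM1 ((quot n).2 hA).1
    · rw [diniInfR]
      apply aux_liminf_bot
      intro M δ hδ
      obtain ⟨N, hN⟩ := aux_index M δ hδ
      obtain ⟨n, hnN, hA⟩ := frequently_atTop.1 hfr' N
      obtain ⟨-, hM2, hδ'⟩ := hN n hnN
      obtain ⟨⟨h3, h4⟩, hzI⟩ := hz n
      refine ⟨z n, ⟨h3, hzI⟩, ?_, ?_⟩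
      · rw [abs_of_pos (by linarith : (0:ℝ) < z n - y)]; linarith
      · exact lt_trans ((quot n).2 hA).2 hM2
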